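/- If ⊗ is the tensor product of a closed symmetric monoidal structure on the category Graph of reflexive graphs, then the canonical morphism I_1 ⊔ I_1 ≅ (I_0 ⊔ I_0) ⊗ I_1 → I_1 ⊗ I_1 induced by tensoring the endpoint inclusion ∂ : I_0 ⊔ I_0 → I_1 with the identity of I_1 is an epimorphism in Graph. -/

import Mathlib

open CategoryTheory MonoidalCategory

/-- The category of (reflexive) graphs: an object is a set of vertices with an
irreflexive symmetric adjacency relation. -/
structure GraphCat : Type 1 where
  V : Type
  adj : V → V → Prop
  symm : ∀ {v w : V}, adj v w → adj w v
  loopless : ∀ v : V, ¬ adj v v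

namespace GraphCat

/-- A graph map: whenever `v ∼ w`, either `f v = f w` or `f v ∼ f w`. -/
structure Hom (X Y : GraphCat) where
  toFun : X.V → Y.V
  map_adj : ∀ {v w : X.V}, X.adj v w → toFun v = toFun w ∨ Y.adj (toFun v) (toFun w)

theorem Hom.ext' {X Y : GraphCat} {f g : Hom X Y} (h : f.toFun = g.toFun) : f = g := by
  cases f; cases g; cases h; rfl

instance : Category GraphCat where
  Hom := Hom
  id X := ⟨fun v => v, fun h => Or.inr h⟩
  comp f g := ⟨fun v => g.toFun (f.toFun v), fun {v w} h => by
    rcases f.map_adj h with h' | h'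
    · exact Or.inl (congrArg g.toFun h')
    · exact g.map_adj h'⟩
  id_comp f := Hom.ext' rfl
  comp_id f := Hom.ext' rfl
  assoc f g h := Hom.ext' rfl

/-- The one-vertex graph `I₀`. -/
def I0 : GraphCat := ⟨PUnit, fun _ _ => False, fun h => h, fun _ h => h⟩

/-- The graph `I₁` with two vertices `s = false` and `t = true` joined by an edge. -/
def I1 : GraphCat := ⟨Bool, fun v w => v ≠ w, Ne.symm, fun _ h => h rfl⟩

/-- The disjoint union (coproduct) of two graphs. -/
def sumGraph (X Y : GraphCat) : GraphCat where
  V := X.V ⊕ Y.V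
  adj p q := match p, q with
    | Sum.inl a, Sum.inl b => X.adj a b
    | Sum.inr a, Sum.inr b => Y.adj a b
    | _, _ => False
  symm := by
    rintro (a | a) (b | b) h
    · exact X.symm h
    · exact h.elim
    · exact h.elim
    · exact Y.symm h
  loopless := by
    rintro (a | a) h
    · exact X.loopless a h
    · exact Y.loopless a h

/-- The endpoint inclusion `∂ : I₀ ⊔ I₀ ⟶ I₁`, sending the two copies of `I₀` to the
two vertices of `I₁`. -/
def endpoints : sumGraph I0 I0 ⟶ I1 where
  toFun := Sum.elim (fun _ => false) (fun _ => true)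
  map_adj := by rintro (a | a) (b | b) h <;> exact h.elim

end GraphCat

open GraphCat

/-- If `⊗` is the tensor product of a closed symmetric monoidal structure on the
category of (reflexive) graphs, then the canonical morphism
`I₁ ⊔ I₁ ≅ (I₀ ⊔ I₀) ⊗ I₁ ⟶ I₁ ⊗ I₁` obtained by tensoring the endpoint inclusion
`∂ : I₀ ⊔ I₀ ⟶ I₁` with the identity of `I₁` is an epimorphism. -/

theorem endpoints_epi : Epi endpoints := ⟨fun {Z} g h H => Hom.ext' (funext fun b => by
  cases b
  · exact congrArg (fun k => Hom.toFun k (Sum.inl PUnit.unit)) H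
  · exact congrArg (fun k => Hom.toFun k (Sum.inr PUnit.unit)) H)⟩

theorem endpoints_tensor_epi [MonoidalCategory GraphCat] [SymmetricCategory GraphCat]
    [MonoidalClosed GraphCat] :
    Epi (endpoints ⊗ₘ 𝟙 I1) := by
  haveI : (tensorLeft I1).IsLeftAdjoint := (ihom.adjunction I1).isLeftAdjoint
  haveI : Epi endpoints := endpoints_epi
  haveI h2 : Epi (I1 ◁ endpoints) := by
    show Epi ((tensorLeft I1).map endpoints)
    exact inferInstance
  have key : (endpoints ⊗ₘ 𝟙 I1) =
      (β_ (sumGraph I0 I0) I1).hom ≫ (𝟙 I1 ⊗ₘ endpoints) ≫ (β_ I1 I1).inv := by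
    rw [← Category.assoc, ← BraidedCategory.braiding_naturality, Category.assoc,
      Iso.hom_inv_id, Category.comp_id]
  rw [key, MonoidalCategory.id_tensorHom]
  infer_instance
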